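/- Let X be a Polish space and Y a standard Borel space. Then the σ-algebra Σ(X,Y) separates points: for any two Baire measurable functions f, g : X → Y that are not *-equal, there is a set S ∈ Σ(X,Y) with [f] ∈ S and [g] ∉ S. -/

import Mathlib

open Set Function Topology

namespace DescColor

/-- A set is *Baire measurable* if it differs from an open set by a meager set. -/
def BaireMSet {X : Type*} [TopologicalSpace X] (S : Set X) : Prop :=
  ∃ U : Set X, IsOpen U ∧ IsMeagre (symmDiff S U)

/-- A function is *Baire measurable* if preimages of measurable (Borel) sets are
Baire measurable. -/
def BaireMFun {X Y : Type*} [TopologicalSpace X] [MeasurableSpace Y] (f : X → Y) : Prop :=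
  ∀ B : Set Y, MeasurableSet B → BaireMSet (f ⁻¹' B)

variable {Γ : Type*}

/-- The shift action of `Γ` on colorings `Γ → ℕ`: `(γ · ω)(δ) = ω (δ γ)`. -/
def shift [Group Γ] (γ : Γ) (ω : Γ → ℕ) : Γ → ℕ := fun δ => ω (δ * γ)

/-- A subshift: a closed shift-invariant set of colorings. -/
def IsSubshift [Group Γ] (Ω : Set (Γ → ℕ)) : Prop :=
  IsClosed Ω ∧ ∀ (γ : Γ), ∀ ω ∈ Ω, shift γ ω ∈ Ω

/-- The coding map `π_f(x)(γ) = f (γ • x)`. -/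
def codingMap [Group Γ] {X : Type*} [MulAction Γ X] (f : X → ℕ) (x : X) : Γ → ℕ :=
  fun γ => f (γ • x)

/-- The action of `Γ` on `X` admits a Baire measurable `Ω`-coloring. -/
def HasBMColoring [Group Γ] (X : Type*) [TopologicalSpace X] [MulAction Γ X]
    (Ω : Set (Γ → ℕ)) : Prop :=
  ∃ f : X → ℕ, BaireMFun f ∧ {x : X | codingMap f x ∈ Ω} ∈ residual X

/-- The action of `Γ` on `X` is generically smooth. -/
def GenSmooth (Γ : Type*) [Group Γ] (X : Type*) [TopologicalSpace X] [MulAction Γ X] : Prop :=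
  ∃ f : X → ℝ, BaireMFun f ∧ ∀ x y : X, f x = f y ↔ ∃ γ : Γ, γ • x = y

/-- The shift action of `Γ` on `ℕ^Γ` admits a Baire measurable `Ω`-coloring. -/
def ShiftHasBMColoring (Γ : Type*) [Group Γ] (Ω : Set (Γ → ℕ)) : Prop :=
  ∃ f : (Γ → ℕ) → ℕ, BaireMFun f ∧
    {ω : Γ → ℕ | (fun γ : Γ => f (shift γ ω)) ∈ Ω} ∈ residual (Γ → ℕ)

/-- A free continuous action of `Γ` on a Polish space. -/
structure FreePolishAction (Γ : Type*) [Group Γ] where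
  X : Type
  ts : TopologicalSpace X
  polish : @PolishSpace X ts
  smul : Γ → X → X
  one_smul' : ∀ x, smul 1 x = x
  mul_smul' : ∀ γ δ x, smul (γ * δ) x = smul γ (smul δ x)
  cont : ∀ γ : Γ, @Continuous X X ts ts (smul γ)
  free : ∀ (γ : Γ) (x : X), smul γ x = x → γ = 1

/-- A free continuous action on a Polish space admits a Baire measurable `Ω`-coloring. -/
def FreePolishAction.HasBMCol [Group Γ] (α : FreePolishAction Γ) (Ω : Set (Γ → ℕ)) : Prop :=
  letI := α.ts
  ∃ f : α.X → ℕ, BaireMFun f ∧ {x : α.X | (fun γ : Γ => f (α.smul γ x)) ∈ Ω} ∈ residual α.X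

/-- A free continuous action on a Polish space is generically smooth. -/
def FreePolishAction.IsGenSmooth [Group Γ] (α : FreePolishAction Γ) : Prop :=
  letI := α.ts
  ∃ f : α.X → ℝ, BaireMFun f ∧ ∀ x y : α.X, f x = f y ↔ ∃ γ : Γ, α.smul γ x = y

/-- A subshift is *hard* if every free continuous action of `Γ` on a Polish space that
admits a Baire measurable `Ω`-coloring is generically smooth. -/
def Hard (Γ : Type*) [Group Γ] (Ω : Set (Γ → ℕ)) : Prop :=
  ∀ α : FreePolishAction Γ, α.HasBMCol Ω → α.IsGenSmooth

/-- A subshift is *easy* if every free continuous action of `Γ` on a Polish space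
admits a Baire measurable `Ω`-coloring. -/
def Easy (Γ : Type*) [Group Γ] (Ω : Set (Γ → ℕ)) : Prop :=
  ∀ α : FreePolishAction Γ, α.HasBMCol Ω

/-- Finite partial colorings of `Γ`: partial maps `Γ ⇀ ℕ` with finite domain. -/
abbrev FPC (Γ : Type*) : Type _ := {φ : Γ → Option ℕ // {γ : Γ | φ γ ≠ none}.Finite}

/-- The domain of a finite partial coloring. -/
def domP (φ : FPC Γ) : Set Γ := {γ : Γ | φ.1 γ ≠ none}

/-- `Fin(Ω)`: the set of finite partial colorings extending to an element of `Ω`. -/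
def FinOf (Ω : Set (Γ → ℕ)) : Set (FPC Γ) :=
  {φ | ∃ ω ∈ Ω, ∀ (γ : Γ) (c : ℕ), φ.1 γ = some c → ω γ = c}

/-- `g : FPC Γ → Bool` codes (the set `Fin(Ω)` of) the subshift `Ω`. -/
def CodesSubshift [Group Γ] (g : FPC Γ → Bool) (Ω : Set (Γ → ℕ)) : Prop :=
  IsSubshift Ω ∧ ∀ φ : FPC Γ, g φ = true ↔ φ ∈ FinOf Ω

/-- The shift action of `Γ` on finite partial colorings: `(γ · φ)(δ) = φ(δγ)`. -/
def shiftP [Group Γ] (γ : Γ) (φ : FPC Γ) : FPC Γ :=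
  ⟨fun δ => φ.1 (δ * γ), by
    apply (φ.2.image fun δ => δ * γ⁻¹).subset
    intro δ hδ
    exact ⟨δ * γ, hδ, by simp⟩⟩

/-- The empty partial coloring. -/
def emptyP (Γ : Type*) : FPC Γ := ⟨fun _ => none, by simp⟩

/-- The union (join) of two partial colorings (values of `φ` take precedence). -/
def joinP (φ ψ : FPC Γ) : FPC Γ :=
  ⟨fun δ => match φ.1 δ with | some c => some c | none => ψ.1 δ, by
    apply (φ.2.union ψ.2).subset
    intro δ hδ
    by_cases h : φ.1 δ = none
    · right
      simp only [mem_setOf_eq, h] at hδ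
      exact hδ
    · exact Or.inl h⟩

/-- The union of a finite list of partial colorings. -/
def joinList (l : List (FPC Γ)) : FPC Γ := l.foldr joinP (emptyP Γ)

/-- `φ[γ, r]`: the restriction of `φ` to the closed ball `B(γ, r)`. -/
noncomputable def restrictBall [MetricSpace Γ] (φ : FPC Γ) (γ : Γ) (r : ℝ) : FPC Γ :=
  ⟨fun δ => if dist γ δ ≤ r then φ.1 δ else none, by
    apply φ.2.subset
    intro δ hδ
    by_cases h : dist γ δ ≤ r
    · simp only [mem_setOf_eq, if_pos h] at hδ
      exact hδ
    · simp only [mem_setOf_eq, if_neg h] at hδ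
      exact absurd rfl hδ⟩

/-- `φ ∪ {(γ, c)}`. -/
def insertP [DecidableEq Γ] (φ : FPC Γ) (γ : Γ) (c : ℕ) : FPC Γ :=
  ⟨fun δ => if δ = γ then some c else φ.1 δ, by
    apply (φ.2.insert γ).subset
    intro δ hδ
    by_cases h : δ = γ
    · exact Or.inl h
    · right
      simp only [mem_setOf_eq, if_neg h] at hδ
      exact hδ⟩

/-- The restriction of a total coloring `ω` to a finite set `S`. -/
def restrictTo [DecidableEq Γ] (ω : Γ → ℕ) (S : Finset Γ) : FPC Γ :=
  ⟨fun δ => if δ ∈ S then some (ω δ) else none, by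
    apply S.finite_toSet.subset
    intro δ hδ
    by_cases h : δ ∈ S
    · exact h
    · simp only [mem_setOf_eq, if_neg h] at hδ
      exact absurd rfl hδ⟩

/-- Post-composition of a partial coloring with `ρ : ℕ → ℕ`. -/
def mapP (ρ : ℕ → ℕ) (φ : FPC Γ) : FPC Γ :=
  ⟨fun δ => (φ.1 δ).map ρ, by
    apply φ.2.subset
    intro δ hδ
    intro h
    simp only [mem_setOf_eq, h] at hδ
    exact hδ rfl⟩

/-- `ψ` is a restriction of `φ`. -/
def IsRestrictionOf (ψ φ : FPC Γ) : Prop := ∀ δ : Γ, ψ.1 δ = none ∨ ψ.1 δ = φ.1 δ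

/-- A `Γ`-ideal: a shift-invariant set of finite partial colorings closed under
restrictions. -/
def IsGammaIdeal [Group Γ] (P : Set (FPC Γ)) : Prop :=
  (∀ (γ : Γ), ∀ φ ∈ P, shiftP γ φ ∈ P) ∧
  (∀ φ ∈ P, ∀ ψ : FPC Γ, IsRestrictionOf ψ φ → ψ ∈ P)

/-- An extendable `Γ`-ideal. -/
def IsExtendable [DecidableEq Γ] (P : Set (FPC Γ)) : Prop :=
  ∀ φ ∈ P, ∀ γ : Γ, φ.1 γ = none → ∃ c : ℕ, insertP φ γ c ∈ P

/-- `φ` and `ψ` are `R`-separated: `dist(dom φ, dom ψ) > R φ + R ψ`. -/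
def RSeparated [MetricSpace Γ] (R : FPC Γ → ℝ) (φ ψ : FPC Γ) : Prop :=
  ∀ γ ∈ domP φ, ∀ δ ∈ domP ψ, R φ + R ψ < dist γ δ

/-- The join property of a `Γ`-ideal `P`. -/
def HasJoinProperty [Group Γ] [MetricSpace Γ] (P : Set (FPC Γ)) : Prop :=
  ∃ R : FPC Γ → ℝ, (∀ φ, 0 ≤ R φ) ∧ (∀ (γ : Γ), ∀ φ ∈ P, R (shiftP γ φ) = R φ) ∧
    ∀ l : List (FPC Γ), (∀ φ ∈ l, φ ∈ P) → l.Pairwise (RSeparated R) → joinList l ∈ P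

/-- `P^loc_r`: partial colorings that are `r`-locally in `P`. -/
def LocallyIn [MetricSpace Γ] (P : Set (FPC Γ)) (r : ℕ → ℝ) : Set (FPC Γ) :=
  {φ | ∀ (γ : Γ) (c : ℕ), φ.1 γ = some c → restrictBall φ γ (r c) ∈ P}

/-- A local `Γ`-ideal. -/
def IsLocal [MetricSpace Γ] (P : Set (FPC Γ)) : Prop :=
  ∃ r : ℕ → ℝ, (∀ c, 0 ≤ r c) ∧ P = LocallyIn P r

/-- `Col(P)`: colorings all of whose finite restrictions lie in `P`. -/
def ColOf [DecidableEq Γ] (P : Set (FPC Γ)) : Set (Γ → ℕ) :=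
  {ω | ∀ S : Finset Γ, restrictTo ω S ∈ P}

/-! ### The space of Baire measurable functions -/

/-- Baire measurable functions from `X` to `Y`. -/
abbrev BMFunSub (X Y : Type*) [TopologicalSpace X] [MeasurableSpace Y] :=
  {f : X → Y // BaireMFun f}

/-- Equality on a comeager set. -/
def BFunRel {X Y : Type*} [TopologicalSpace X] [MeasurableSpace Y]
    (f g : BMFunSub X Y) : Prop := {x : X | f.1 x = g.1 x} ∈ residual X

/-- `B(X,Y)`: Baire measurable functions modulo equality on a comeager set. -/
abbrev BFun (X Y : Type*) [TopologicalSpace X] [MeasurableSpace Y] :=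
  Quot (BFunRel (X := X) (Y := Y))

/-- `[U, A]`: the classes of functions `f` with `U ∖ f⁻¹(A)` meager. -/
def forceSet {X Y : Type*} [TopologicalSpace X] [MeasurableSpace Y]
    (U : Set X) (A : Set Y) : Set (BFun X Y) :=
  {F | ∃ f : BMFunSub X Y, Quot.mk BFunRel f = F ∧ IsMeagre (U \ f.1 ⁻¹' A)}

/-- `Σ(X,Y)`: the σ-algebra generated by the sets `[U, A]` for `U` nonempty open
and `A` Borel. -/
def SigmaXY (X Y : Type*) [TopologicalSpace X] [MeasurableSpace Y] :
    MeasurableSpace (BFun X Y) :=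
  MeasurableSpace.generateFrom
    {S | ∃ (U : Set X) (A : Set Y), IsOpen U ∧ U.Nonempty ∧ MeasurableSet A ∧ S = forceSet U A}

section Aux

open Filter

lemma meagre_symmDiff_iff {X : Type*} [TopologicalSpace X] {S U : Set X} :
    IsMeagre (symmDiff S U) ↔ S =ᵇ U := by
  rw [IsMeagre]
  have : (symmDiff S U)ᶜ = {x | S x = U x} := by
    ext x
    simp only [Set.mem_compl_iff, Set.mem_symmDiff, Set.mem_setOf_eq, eq_iff_iff]
    change ¬ _ ↔ (x ∈ S ↔ x ∈ U)
    tauto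
  rw [this]
  rfl

lemma baireMSet_iff {X : Type*} [TopologicalSpace X] {S : Set X} :
    BaireMSet S ↔ BaireMeasurableSet S := by
  constructor
  · rintro ⟨U, hUo, hm⟩
    exact hUo.baireMeasurableSet.congr (meagre_symmDiff_iff.mp hm).symm
  · intro h
    obtain ⟨U, hUo, heq⟩ := h.residualEq_isOpen
    exact ⟨U, hUo, meagre_symmDiff_iff.mpr heq⟩

lemma not_isMeagre_of_isOpen {X : Type*} [TopologicalSpace X] [BaireSpace X] {U : Set X}
    (hU : IsOpen U) (hne : U.Nonempty) : ¬ IsMeagre U := by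
  intro h
  obtain ⟨y, hyU, hyc⟩ := (dense_of_mem_residual h).inter_open_nonempty U hU hne
  exact hyc hyU

lemma isMeagre_biUnion {X : Type*} [TopologicalSpace X] {ι : Type*} {S : Set ι}
    (hS : S.Countable) {m : ι → Set X} (h : ∀ i ∈ S, IsMeagre (m i)) :
    IsMeagre (⋃ i ∈ S, m i) := by
  rw [IsMeagre, Set.compl_iUnion₂]
  exact (countable_bInter_mem hS).mpr h

lemma meagre_union {X : Type*} [TopologicalSpace X] {s t : Set X}
    (hs : IsMeagre s) (ht : IsMeagre t) : IsMeagre (s ∪ t) := by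
  rw [IsMeagre, Set.compl_union]
  exact Filter.inter_mem hs ht

lemma bFunRel_equivalence {X Y : Type*} [TopologicalSpace X] [MeasurableSpace Y] :
    Equivalence (BFunRel (X := X) (Y := Y)) := by
  constructor
  · intro f
    have : {x : X | f.1 x = f.1 x} = Set.univ := by ext x; simp
    rw [BFunRel, this]
    exact Filter.univ_mem
  · intro f g h
    have : {x : X | g.1 x = f.1 x} = {x : X | f.1 x = g.1 x} := by
      ext x; exact eq_comm
    rw [BFunRel, this]
    exact h
  · intro f g h hfg hgh
    refine Filter.mem_of_superset (Filter.inter_mem hfg hgh) ?_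
    rintro x ⟨h1, h2⟩
    exact h1.trans h2

lemma exists_sep_of_diff_nonmeager {X Y : Type*} [TopologicalSpace X] [BaireSpace X]
    [MeasurableSpace Y] (f g : X → Y) (hf : BaireMFun f) (hg : BaireMFun g)
    (A : Set Y) (hA : MeasurableSet A) (hB : ¬ IsMeagre (f ⁻¹' A \ g ⁻¹' A)) :
    ∃ S : Set (BFun X Y), @MeasurableSet (BFun X Y) (SigmaXY X Y) S ∧
      Quot.mk BFunRel ⟨f, hf⟩ ∈ S ∧ Quot.mk BFunRel ⟨g, hg⟩ ∉ S := by
  set B : Set X := f ⁻¹' A \ g ⁻¹' A with hBdef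
  have hBbm : BaireMeasurableSet B :=
    (baireMSet_iff.mp (hf A hA)).diff (baireMSet_iff.mp (hg A hA))
  obtain ⟨U, hUo, heq⟩ := hBbm.residualEq_isOpen
  have hmeag : IsMeagre (symmDiff B U) := meagre_symmDiff_iff.mpr heq
  have hUB : U \ B ⊆ symmDiff B U := fun x hx => Or.inr hx
  have hBU : B \ U ⊆ symmDiff B U := fun x hx => Or.inl hx
  have hUne : U.Nonempty := by
    rcases Set.eq_empty_or_nonempty U with h | h
    · exfalso
      apply hB
      apply hmeag.mono
      intro x hx
      exact Or.inl ⟨hx, by simp [h]⟩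
    · exact h
  refine ⟨forceSet U A, ?_, ?_, ?_⟩
  · exact MeasurableSpace.measurableSet_generateFrom ⟨U, A, hUo, hUne, hA, rfl⟩
  · refine ⟨⟨f, hf⟩, rfl, ?_⟩
    apply hmeag.mono
    intro x hx
    exact hUB ⟨hx.1, fun hxB => hx.2 hxB.1⟩
  · rintro ⟨g', hq, hmeag'⟩
    have hrel : BFunRel g' ⟨g, hg⟩ :=
      bFunRel_equivalence.eqvGen_iff.mp (Quot.eqvGen_exact hq)
    have hne : IsMeagre {x : X | g'.1 x ≠ g x} := by
      rw [IsMeagre]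
      have : {x : X | g'.1 x ≠ g x}ᶜ = {x : X | g'.1 x = g x} := by
        ext x; simp
      rw [this]; exact hrel
    have hsub : U ⊆ (U \ g'.1 ⁻¹' A) ∪ {x : X | g'.1 x ≠ g x} ∪ symmDiff B U := by
      intro x hxU
      by_cases h1 : g'.1 x ∈ A
      · by_cases h2 : g'.1 x = g x
        · refine Or.inr (hUB ⟨hxU, fun hxB => hxB.2 ?_⟩)
          rw [Set.mem_preimage, ← h2]; exact h1
        · exact Or.inl (Or.inr h2)
      · exact Or.inl (Or.inl ⟨hxU, h1⟩)
    exact not_isMeagre_of_isOpen hUo hUne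
      ((meagre_union (meagre_union hmeag' hne) hmeag).mono hsub)

end Aux

/-- The σ-algebra `Σ(X,Y)` separates points of `B(X,Y)`. -/
theorem stmt4 (X Y : Type*) [TopologicalSpace X] [PolishSpace X]
    [MeasurableSpace Y] [StandardBorelSpace Y]
    (f g : X → Y) (hf : BaireMFun f) (hg : BaireMFun g)
    (hne : {x : X | f x = g x} ∉ residual X) :
    ∃ S : Set (BFun X Y), @MeasurableSet (BFun X Y) (SigmaXY X Y) S ∧
      Quot.mk BFunRel ⟨f, hf⟩ ∈ S ∧ Quot.mk BFunRel ⟨g, hg⟩ ∉ S := by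
  have hBaire : BaireSpace X := by
    letI := TopologicalSpace.upgradeIsCompletelyMetrizable X
    exact inferInstance
  obtain ⟨𝒮, h𝒮c, h𝒮m, h𝒮sep⟩ := exists_countable_separating Y MeasurableSet Set.univ
  -- find a measurable set whose preimage difference is nonmeager
  have hcover : {x : X | f x = g x}ᶜ ⊆
      ⋃ s ∈ 𝒮, ((f ⁻¹' s \ g ⁻¹' s) ∪ (g ⁻¹' s \ f ⁻¹' s)) := by
    intro x hx
    by_contra hnx
    apply hx
    apply h𝒮sep (f x) (Set.mem_univ _) (g x) (Set.mem_univ _)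
    intro s hs
    simp only [Set.mem_iUnion, not_exists] at hnx
    by_contra hiff
    apply hnx s hs
    by_cases hfs : f x ∈ s
    · exact Or.inl ⟨hfs, fun hgs => hiff ⟨fun _ => hgs, fun _ => hfs⟩⟩
    · refine Or.inr ⟨?_, hfs⟩
      by_contra hgs
      exact hiff ⟨fun h => absurd h hfs, fun h => absurd h hgs⟩
  have hex : ∃ s ∈ 𝒮, ¬ IsMeagre (f ⁻¹' s \ g ⁻¹' s) ∨ ¬ IsMeagre (g ⁻¹' s \ f ⁻¹' s) := by
    by_contra h
    push_neg at h
    have hm : IsMeagre ({x : X | f x = g x}ᶜ) :=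
      (isMeagre_biUnion h𝒮c (fun s hs => meagre_union (h s hs).1 (h s hs).2)).mono hcover
    rw [IsMeagre, compl_compl] at hm
    exact hne hm
  obtain ⟨s, hs, hcase | hcase⟩ := hex
  · exact exists_sep_of_diff_nonmeager f g hf hg s (h𝒮m s hs) hcase
  · have heq : f ⁻¹' sᶜ \ g ⁻¹' sᶜ = g ⁻¹' s \ f ⁻¹' s := by
      ext x
      simp only [Set.mem_diff, Set.mem_preimage, Set.mem_compl_iff, not_not]
      tauto
    exact exists_sep_of_diff_nonmeager f g hf hg sᶜ (h𝒮m s hs).compl (heq ▸ hcase)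

end DescColor
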